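/- Let C be a monoidal category, e an object of C and η : 𝟙 ⟶ e a morphism such that η ▷ e and e ◁ η are isomorphisms. Then there exists a multiplication μ : e ⊗ e ⟶ e making (e, η, μ) a monoid object in C (i.e. satisfying left unitality, right unitality, and associativity), and this μ is unique: any two multiplications on e with unit η making e a monoid object coincide. -/

import Mathlib

open CategoryTheory MonoidalCategory

/-- An idempotent `E₀`-object `(e, η)` of a monoidal category (i.e. `η ▷ e` and `e ◁ η`
are isomorphisms) carries a unique multiplication `μ : e ⊗ e ⟶ e` making `(e, η, μ)` a
monoid object. -/
theorem idempotent_existsUnique_mul {C : Type*} [Category C] [MonoidalCategory C]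
    (e : C) (η : 𝟙_ C ⟶ e) (h₁ : IsIso (η ▷ e)) (h₂ : IsIso (e ◁ η)) :
    ∃! μ : e ⊗ e ⟶ e,
      (η ▷ e) ≫ μ = (λ_ e).hom ∧ (e ◁ η) ≫ μ = (ρ_ e).hom ∧
      (μ ▷ e) ≫ μ = (α_ e e e).hom ≫ (e ◁ μ) ≫ μ := by
  set μ : e ⊗ e ⟶ e := inv (η ▷ e) ≫ (λ_ e).hom with hμ
  have unit1 : (η ▷ e) ≫ μ = (λ_ e).hom := by simp [hμ]
  -- key : the two "insertions" e ⟶ e ⊗ e agree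
  have key : (λ_ e).inv ≫ (η ▷ e) = (ρ_ e).inv ≫ (e ◁ η) := by
    -- first, after precomposing with η
    have hη : η ≫ (λ_ e).inv ≫ (η ▷ e) = η ≫ (ρ_ e).inv ≫ (e ◁ η) := by
      have h1 : (η ⊗ₘ η) = η ▷ 𝟙_ C ≫ e ◁ η := tensorHom_def η η
      have h2 : (η ⊗ₘ η) = 𝟙_ C ◁ η ≫ η ▷ e := tensorHom_def' η η
      rw [MonoidalCategory.whiskerRight_id, ← unitors_equal] at h1
      rw [MonoidalCategory.id_whiskerLeft] at h2
      have := h1.symm.trans h2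
      simp only [Category.assoc] at this
      exact ((cancel_epi (λ_ (𝟙_ C)).hom).mp this).symm
    -- whisker with e on the right and cancel the iso η ▷ e
    have h3 : ((λ_ e).inv ≫ (η ▷ e)) ▷ e = ((ρ_ e).inv ≫ (e ◁ η)) ▷ e := by
      have := congrArg (· ▷ e) hη
      simpa [comp_whiskerRight, ← cancel_epi (η ▷ e)] using this
    -- transfer to unwhiskered maps using iso (e ⊗ e) ◁ η
    have hiso : IsIso ((e ⊗ e) ◁ η) := by
      rw [tensor_whiskerLeft]
      infer_instance
    have h4 : ((λ_ e).inv ≫ (η ▷ e)) ▷ 𝟙_ C = ((ρ_ e).inv ≫ (e ◁ η)) ▷ 𝟙_ C := by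
      rw [← cancel_mono ((e ⊗ e) ◁ η), ← whisker_exchange, ← whisker_exchange, h3]
    rw [← cancel_epi (ρ_ e).hom, ← cancel_mono (ρ_ (e ⊗ e)).inv]
    simpa [MonoidalCategory.whiskerRight_id] using h4
  have unit2 : (e ◁ η) ≫ μ = (ρ_ e).hom := by
    have : (e ◁ η) = (ρ_ e).hom ≫ (λ_ e).inv ≫ (η ▷ e) := by
      rw [key]; simp
    rw [this, hμ]; simp
  have assoc : (μ ▷ e) ≫ μ = (α_ e e e).hom ≫ (e ◁ μ) ≫ μ := by
    have : IsIso ((η ▷ e) ▷ e) := by infer_instance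
    rw [← cancel_epi ((η ▷ e) ▷ e), ← comp_whiskerRight_assoc, unit1,
      associator_naturality_left_assoc, ← whisker_exchange_assoc, unit1,
      leftUnitor_naturality, leftUnitor_tensor_hom]
    simp
  refine ⟨μ, ⟨unit1, unit2, assoc⟩, ?_⟩
  rintro ν ⟨hν, -, -⟩
  rw [hμ, ← hν]
  simp
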